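/- Cofibrations are epimorphisms in the combinatorial model of 2-Cob: if ψ: X → Y is a cofibration and φ, φ': Y → Z are cobordisms with φ ∘ ψ = φ' ∘ ψ (as equivalence classes of cobordisms), then φ = φ'. -/

import Mathlib

open scoped Classical

/-- The relation generating the pushout of a span `A ← k → B` of (finite) sets. -/
def PRel {k A B : Type} (f : k → A) (g : k → B) : A ⊕ B → A ⊕ B → Prop :=
  fun x y => ∃ z, x = Sum.inl (f z) ∧ y = Sum.inr (g z)

/-- The pushout of the span `A ← k → B`. -/
def Pushout {k A B : Type} (f : k → A) (g : k → B) : Type :=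
  Quot (PRel f g)

/-- Canonical map `ι_A : A → A ⊔_k B`. -/
def pInl {k A B : Type} (f : k → A) (g : k → B) (a : A) : Pushout f g :=
  Quot.mk _ (Sum.inl a)

/-- Canonical map `ι_B : B → A ⊔_k B`. -/
def pInr {k A B : Type} (f : k → A) (g : k → B) (b : B) : Pushout f g :=
  Quot.mk _ (Sum.inr b)

instance {k A B : Type} (f : k → A) (g : k → B) [Finite A] [Finite B] :
    Finite (Pushout f g) :=
  Quot.finite _

noncomputable instance {k A B : Type} (f : k → A) (g : k → B) [Fintype A] [Fintype B] :
    Fintype (Pushout f g) :=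
  Fintype.ofFinite _

/-- The genus formula of Definition 3.4:
`g(x) = 1 + Σ_{ι_A(a)=x}(g₁(a)−1) + Σ_{ι_B(b)=x}(g₂(b)−1) + #{y ∈ k : y ↦ x}`. -/
noncomputable def compGenus {k A B : Type} [Fintype k] [Fintype A] [Fintype B]
    (f : k → A) (g : k → B) (g1 : A → ℤ) (g2 : B → ℤ) (x : Pushout f g) : ℤ :=
  1 + (∑ a ∈ Finset.univ.filter (fun a => pInl f g a = x), (g1 a - 1))
    + (∑ b ∈ Finset.univ.filter (fun b => pInr f g b = x), (g2 b - 1))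
    + ((Finset.univ.filter (fun y : k => pInl f g (f y) = x)).card : ℤ)

/-- A combinatorial 2-cobordism from the finite set `m` to the finite set `n`. -/
structure Cob (m n : Type) : Type 1 where
  C : Type
  [fin : Fintype C]
  lm : m → C
  ln : n → C
  g : C → ℕ

attribute [instance] Cob.fin

/-- Composition of combinatorial 2-cobordisms via pushout of component sets
and the genus formula of Definition 3.4. -/
noncomputable def Cob.comp {m k n : Type} [Fintype k] (ψ : Cob k n) (φ : Cob m k) :
    Cob m n where
  C := Pushout φ.ln ψ.lm
  lm := fun x => pInl φ.ln ψ.lm (φ.lm x)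
  ln := fun y => pInr φ.ln ψ.lm (ψ.ln y)
  g := fun x =>
    (compGenus φ.ln ψ.lm (fun a => (φ.g a : ℤ)) (fun b => (ψ.g b : ℤ)) x).toNat

/-- Equivalence of combinatorial 2-cobordisms: a bijection of component sets
intertwining the structure maps and the genus functions. -/
def Cob.Equiv {m n : Type} (φ φ' : Cob m n) : Prop :=
  ∃ χ : φ.C ≃ φ'.C,
    (∀ x, χ (φ.lm x) = φ'.lm x) ∧ (∀ y, χ (φ.ln y) = φ'.ln y) ∧
    (∀ c, φ'.g (χ c) = φ.g c)

/-- A cofibration: `l_n` is injective and `l_n` lifts through `l_m`. -/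
def Cob.IsCofib {m n : Type} (φ : Cob m n) : Prop :=
  Function.Injective φ.ln ∧ ∃ u : n → m, ∀ y, φ.lm (u y) = φ.ln y

/-- A fibration: `l_m` is injective, `l_n` is surjective, and `g ∘ l_m = 0`. -/
def Cob.IsFib {m n : Type} (φ : Cob m n) : Prop :=
  Function.Injective φ.lm ∧ Function.Surjective φ.ln ∧ ∀ x, φ.g (φ.lm x) = 0

/-- The five local conditions of Definition 5.2.1 defining an oriented 1-cobordism
between signed finite sets (signs recorded by Boolean functions, `true` = `+`). -/
def IsOriented {m n C : Type} (sm : m → Bool) (sn : n → Bool)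
    (lm : m → C) (ln : n → C) : Prop :=
  ∀ c : C,
    (∃ a b : m, sm a = true ∧ sm b = false ∧ a ≠ b ∧
      (∀ x, lm x = c ↔ (x = a ∨ x = b)) ∧ (∀ y, ln y ≠ c)) ∨
    (∃ a b : n, sn a = true ∧ sn b = false ∧ a ≠ b ∧
      (∀ y, ln y = c ↔ (y = a ∨ y = b)) ∧ (∀ x, lm x ≠ c)) ∨
    (∃ a : m, ∃ b : n, sm a = sn b ∧
      (∀ x, lm x = c ↔ x = a) ∧ (∀ y, ln y = c ↔ y = b)) ∨
    ((∀ x, lm x ≠ c) ∧ (∀ y, ln y ≠ c))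

namespace CobEpi

open Finset

variable {k A B : Type}

/-- Normal form for elements of the pushout when `f` is injective. -/
noncomputable def pnorm (f : k → A) (g : k → B) : A ⊕ B → A ⊕ B
  | Sum.inl a => if h : ∃ z, f z = a then Sum.inr (g h.choose) else Sum.inl a
  | Sum.inr b => Sum.inr b

theorem pnorm_inl (f : k → A) (g : k → B) (a : A) :
    pnorm f g (Sum.inl a) = if h : ∃ z, f z = a then Sum.inr (g h.choose) else Sum.inl a := rfl

theorem pnorm_inr (f : k → A) (g : k → B) (b : B) : pnorm f g (Sum.inr b) = Sum.inr b := rfl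

theorem pnorm_rel {f : k → A} {g : k → B} (hf : Function.Injective f)
    {x y : A ⊕ B} (hxy : PRel f g x y) : pnorm f g x = pnorm f g y := by
  obtain ⟨z, rfl, rfl⟩ := hxy
  have h : ∃ z', f z' = f z := ⟨z, rfl⟩
  rw [pnorm_inl, pnorm_inr, dif_pos h, hf h.choose_spec]

theorem mk_pnorm (f : k → A) (g : k → B) (x : A ⊕ B) :
    Quot.mk (PRel f g) (pnorm f g x) = Quot.mk (PRel f g) x := by
  cases x with
  | inr b => rfl
  | inl a =>
    rw [pnorm_inl]
    by_cases h : ∃ z, f z = a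
    · rw [dif_pos h]
      have h2 : Quot.mk (PRel f g) (Sum.inl (f h.choose)) =
          Quot.mk (PRel f g) (Sum.inr (g h.choose)) := Quot.sound ⟨h.choose, rfl, rfl⟩
      rw [h.choose_spec] at h2
      exact h2.symm
    · rw [dif_neg h]

theorem quot_eq_iff {f : k → A} {g : k → B} (hf : Function.Injective f) {x y : A ⊕ B} :
    Quot.mk (PRel f g) x = Quot.mk (PRel f g) y ↔ pnorm f g x = pnorm f g y := by
  constructor
  · intro h
    exact congrArg (Quot.lift (pnorm f g) (fun a b hab => pnorm_rel hf hab)) h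
  · intro h
    rw [← mk_pnorm f g x, ← mk_pnorm f g y, h]

theorem pInr_injective {f : k → A} {g : k → B} (hf : Function.Injective f) :
    Function.Injective (pInr f g) := by
  intro b b' h
  have h2 := (quot_eq_iff hf).1 h
  rwa [pnorm_inr, pnorm_inr, Sum.inr.injEq] at h2

theorem pInl_eq_pInr {f : k → A} {g : k → B} (hf : Function.Injective f) {a : A} {b : B} :
    pInl f g a = pInr f g b ↔ ∃ z, f z = a ∧ g z = b := by
  rw [show pInl f g a = Quot.mk (PRel f g) (Sum.inl a) from rfl,
    show pInr f g b = Quot.mk (PRel f g) (Sum.inr b) from rfl]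
  change Quot.mk (PRel f g) (Sum.inl a) = Quot.mk (PRel f g) (Sum.inr b) ↔ _
  rw [quot_eq_iff hf,
    pnorm_inl, pnorm_inr]
  by_cases h : ∃ z, f z = a
  · rw [dif_pos h, Sum.inr.injEq]
    constructor
    · intro hb; exact ⟨h.choose, h.choose_spec, hb⟩
    · rintro ⟨z, hz, hgz⟩
      rw [← hgz]
      exact congrArg g (hf (h.choose_spec.trans hz.symm))
  · rw [dif_neg h]
    constructor
    · intro h'; exact absurd h' (by simp)
    · rintro ⟨z, hz, -⟩; exact absurd ⟨z, hz⟩ h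

theorem pInl_eq_pInl_free {f : k → A} {g : k → B} (hf : Function.Injective f) {a a' : A}
    (ha : ¬∃ z, f z = a) : pInl f g a' = pInl f g a ↔ a' = a := by
  rw [show pInl f g a' = Quot.mk (PRel f g) (Sum.inl a') from rfl,
    show pInl f g a = Quot.mk (PRel f g) (Sum.inl a) from rfl]
  change Quot.mk (PRel f g) (Sum.inl a') = Quot.mk (PRel f g) (Sum.inl a) ↔ _
  rw [quot_eq_iff hf,
    pnorm_inl, pnorm_inl, dif_neg ha]
  by_cases h' : ∃ z, f z = a'
  · rw [dif_pos h']
    constructor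
    · intro hh; exact absurd hh (by simp)
    · rintro rfl; exact absurd h' ha
  · rw [dif_neg h', Sum.inl.injEq]

theorem pushout_cases (f : k → A) (g : k → B) (p : Pushout f g) :
    (∃ b, p = pInr f g b) ∨ (∃ a, ¬(∃ z, f z = a) ∧ p = pInl f g a) := by
  induction p using Quot.ind with
  | _ x =>
    cases x with
    | inr b => exact Or.inl ⟨b, rfl⟩
    | inl a =>
      by_cases h : ∃ z, f z = a
      · refine Or.inl ⟨g h.choose, ?_⟩
        have h2 : pInl f g (f h.choose) = pInr f g (g h.choose) := Quot.sound ⟨h.choose, rfl, rfl⟩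
        rw [h.choose_spec] at h2
        exact h2
      · exact Or.inr ⟨a, h, rfl⟩

theorem compGenus_pInr [Fintype k] [Fintype A] [Fintype B] {f : k → A}
    (hf : Function.Injective f) (g : k → B) (g1 : A → ℤ) (g2 : B → ℤ) (c : B) :
    compGenus f g g1 g2 (pInr f g c)
      = (∑ z ∈ Finset.univ.filter (fun z => g z = c), g1 (f z)) + g2 c := by
  have hA : Finset.univ.filter (fun a => pInl f g a = pInr f g c)
      = (Finset.univ.filter (fun z => g z = c)).image f := by
    ext a
    simp only [mem_filter, mem_univ, true_and, mem_image, pInl_eq_pInr hf]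
    constructor
    · rintro ⟨z, hz, hgz⟩; exact ⟨z, hgz, hz⟩
    · rintro ⟨z, hgz, hz⟩; exact ⟨z, hz, hgz⟩
  have hB : Finset.univ.filter (fun b => pInr f g b = pInr f g c) = {c} := by
    ext b
    simp only [mem_filter, mem_univ, true_and, mem_singleton]
    exact ⟨fun h => pInr_injective hf h, fun h => by rw [h]⟩
  have hk : Finset.univ.filter (fun y => pInl f g (f y) = pInr f g c)
      = Finset.univ.filter (fun z => g z = c) := by
    ext y
    simp only [mem_filter, mem_univ, true_and, pInl_eq_pInr hf]
    constructor
    · rintro ⟨z, hz, hgz⟩; rw [← hgz]; exact congrArg g (hf hz).symm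
    · intro hy; exact ⟨y, rfl, hy⟩
  rw [compGenus, hA, hB, hk, Finset.sum_image (fun x _ y _ hxy => hf hxy),
    Finset.sum_singleton]
  rw [Finset.sum_sub_distrib, Finset.sum_const, nsmul_eq_mul, mul_one]
  ring

theorem compGenus_pInl_free [Fintype k] [Fintype A] [Fintype B] {f : k → A}
    (hf : Function.Injective f) (g : k → B) (g1 : A → ℤ) (g2 : B → ℤ) {a : A}
    (ha : ¬∃ z, f z = a) :
    compGenus f g g1 g2 (pInl f g a) = g1 a := by
  have hA : Finset.univ.filter (fun a' => pInl f g a' = pInl f g a) = {a} := by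
    ext a'
    simp only [mem_filter, mem_univ, true_and, mem_singleton]
    exact pInl_eq_pInl_free hf ha
  have hB : Finset.univ.filter (fun b => pInr f g b = pInl f g a) = ∅ := by
    ext b
    simp only [mem_filter, mem_univ, true_and, Finset.notMem_empty, iff_false]
    intro hb
    exact ha (by obtain ⟨z, hz, -⟩ := (pInl_eq_pInr hf).1 hb.symm; exact ⟨z, hz⟩)
  have hk : Finset.univ.filter (fun y => pInl f g (f y) = pInl f g a) = ∅ := by
    ext y
    simp only [mem_filter, mem_univ, true_and, Finset.notMem_empty, iff_false]
    intro hy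
    exact ha ⟨y, (pInl_eq_pInl_free hf ha).1 hy⟩
  rw [compGenus, hA, hB, hk, Finset.sum_singleton, Finset.sum_empty, Finset.card_empty]
  push_cast
  ring

end CobEpi
/-- Proposition 4.4: cofibrations are epimorphisms in combinatorial 2-Cob. -/
theorem stmt_8 {X Y Z : Type} [Fintype Y] (ψ : Cob X Y) (hψ : ψ.IsCofib)
    (φ φ' : Cob Y Z) (h : Cob.Equiv (Cob.comp φ ψ) (Cob.comp φ' ψ)) :
    Cob.Equiv φ φ' := by
  classical
  obtain ⟨hinj, u, hu⟩ := hψ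
  obtain ⟨χ, hlm, hln, hgen⟩ := h
  let ρ : φ.C → Pushout ψ.ln φ.lm := pInr ψ.ln φ.lm
  let ρ' : φ'.C → Pushout ψ.ln φ'.lm := pInr ψ.ln φ'.lm
  let χ₀ : Pushout ψ.ln φ.lm ≃ Pushout ψ.ln φ'.lm := χ
  have hlm0 : ∀ x, χ₀ (pInl ψ.ln φ.lm (ψ.lm x)) = pInl ψ.ln φ'.lm (ψ.lm x) := hlm
  have hln0 : ∀ z, χ₀ (ρ (φ.ln z)) = ρ' (φ'.ln z) := hln
  let gg : Pushout ψ.ln φ.lm → ℕ := fun p =>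
    (compGenus ψ.ln φ.lm (fun a => (ψ.g a : ℤ)) (fun b => (φ.g b : ℤ)) p).toNat
  let gg' : Pushout ψ.ln φ'.lm → ℕ := fun p =>
    (compGenus ψ.ln φ'.lm (fun a => (ψ.g a : ℤ)) (fun b => (φ'.g b : ℤ)) p).toNat
  have hgen0 : ∀ p, gg' (χ₀ p) = gg p := hgen
  have hρinj : Function.Injective ρ := CobEpi.pInr_injective hinj
  have hρ'inj : Function.Injective ρ' := CobEpi.pInr_injective hinj
  have hχlm : ∀ y : Y, χ₀ (ρ (φ.lm y)) = ρ' (φ'.lm y) := by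
    intro y
    have h1 : pInl ψ.ln φ.lm (ψ.ln y) = ρ (φ.lm y) := Quot.sound ⟨y, rfl, rfl⟩
    have h1' : pInl ψ.ln φ'.lm (ψ.ln y) = ρ' (φ'.lm y) := Quot.sound ⟨y, rfl, rfl⟩
    rw [← h1, ← h1', ← hu y]
    exact hlm0 (u y)
  let T : φ.C → Prop := fun c => ∃ c', χ₀ (ρ c) = ρ' c'
  let T' : φ'.C → Prop := fun c' => ∃ c, χ₀ (ρ c) = ρ' c'
  have hfiber : ∀ {c c'}, χ₀ (ρ c) = ρ' c' → ∀ w, (φ.lm w = c ↔ φ'.lm w = c') := by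
    intro c c' hcc' w
    constructor
    · intro hw
      apply hρ'inj
      rw [← hχlm w, hw, hcc']
    · intro hw
      apply hρinj
      apply χ₀.injective
      rw [hχlm w, hw, hcc']
  have hggρ : ∀ c : φ.C, gg (ρ c)
      = (∑ w ∈ Finset.univ.filter (fun w => φ.lm w = c), ψ.g (ψ.ln w)) + φ.g c := by
    intro c
    show (compGenus ψ.ln φ.lm _ _ (pInr ψ.ln φ.lm c)).toNat = _
    rw [CobEpi.compGenus_pInr hinj]
    have e : (∑ z ∈ Finset.univ.filter (fun z => φ.lm z = c), ((ψ.g (ψ.ln z) : ℤ)))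
        + (φ.g c : ℤ)
        = (((∑ w ∈ Finset.univ.filter (fun w => φ.lm w = c), ψ.g (ψ.ln w)) + φ.g c : ℕ) : ℤ) := by
      push_cast
      ring
    rw [e, Int.toNat_natCast]
  have hggρ' : ∀ c' : φ'.C, gg' (ρ' c')
      = (∑ w ∈ Finset.univ.filter (fun w => φ'.lm w = c'), ψ.g (ψ.ln w)) + φ'.g c' := by
    intro c'
    show (compGenus ψ.ln φ'.lm _ _ (pInr ψ.ln φ'.lm c')).toNat = _
    rw [CobEpi.compGenus_pInr hinj]
    have e : (∑ z ∈ Finset.univ.filter (fun z => φ'.lm z = c'), ((ψ.g (ψ.ln z) : ℤ)))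
        + (φ'.g c' : ℤ)
        = (((∑ w ∈ Finset.univ.filter (fun w => φ'.lm w = c'), ψ.g (ψ.ln w)) + φ'.g c' : ℕ) : ℤ) := by
      push_cast
      ring
    rw [e, Int.toNat_natCast]
  have hglinked : ∀ {c c'}, χ₀ (ρ c) = ρ' c' → φ'.g c' = φ.g c := by
    intro c c' hcc'
    have h1 := hgen0 (ρ c)
    rw [hcc', hggρ', hggρ] at h1
    have hF : Finset.univ.filter (fun w => φ'.lm w = c')
        = Finset.univ.filter (fun w => φ.lm w = c) := by
      ext w
      simp only [Finset.mem_filter, Finset.mem_univ, true_and]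
      exact (hfiber hcc' w).symm
    rw [hF] at h1
    omega
  have hnotT_fiber : ∀ {c}, ¬ T c → Finset.univ.filter (fun w => φ.lm w = c) = ∅ := by
    intro c hc
    ext w
    simp only [Finset.mem_filter, Finset.mem_univ, true_and, Finset.notMem_empty, iff_false]
    intro hw
    exact hc ⟨φ'.lm w, by rw [← hw]; exact hχlm w⟩
  have hnotT'_fiber : ∀ {c'}, ¬ T' c' → Finset.univ.filter (fun w => φ'.lm w = c') = ∅ := by
    intro c' hc'
    ext w
    simp only [Finset.mem_filter, Finset.mem_univ, true_and, Finset.notMem_empty, iff_false]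
    intro hw
    exact hc' ⟨φ.lm w, by rw [← hw]; exact hχlm w⟩
  have hggρ_notT : ∀ {c}, ¬ T c → gg (ρ c) = φ.g c := by
    intro c hc
    rw [hggρ, hnotT_fiber hc]
    simp
  have hggρ'_notT : ∀ {c'}, ¬ T' c' → gg' (ρ' c') = φ'.g c' := by
    intro c' hc'
    rw [hggρ', hnotT'_fiber hc']
    simp
  have hggfree : ∀ {a}, ¬(∃ z, ψ.ln z = a) → gg (pInl ψ.ln φ.lm a) = ψ.g a := by
    intro a ha
    show (compGenus ψ.ln φ.lm _ _ (pInl ψ.ln φ.lm a)).toNat = _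
    rw [CobEpi.compGenus_pInl_free hinj _ _ _ ha, Int.toNat_natCast]
  have hggfree' : ∀ {a}, ¬(∃ z, ψ.ln z = a) → gg' (pInl ψ.ln φ'.lm a) = ψ.g a := by
    intro a ha
    show (compGenus ψ.ln φ'.lm _ _ (pInl ψ.ln φ'.lm a)).toNat = _
    rw [CobEpi.compGenus_pInl_free hinj _ _ _ ha, Int.toNat_natCast]
  -- counting unlinked components of each genus
  have hcount : ∀ n : ℕ,
      (Finset.univ.filter (fun c : φ.C => ¬ T c ∧ φ.g c = n)).card
        = (Finset.univ.filter (fun c' : φ'.C => ¬ T' c' ∧ φ'.g c' = n)).card := by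
    intro n
    set FAn : Finset ψ.C :=
      Finset.univ.filter (fun a => ¬(∃ z, ψ.ln z = a) ∧ ψ.g a = n) with hFAn
    set Un : Finset φ.C := Finset.univ.filter (fun c => ¬ T c ∧ φ.g c = n) with hUn
    set Un' : Finset φ'.C := Finset.univ.filter (fun c' => ¬ T' c' ∧ φ'.g c' = n) with hUn'
    set Sn : Finset (Pushout ψ.ln φ.lm) :=
      Finset.univ.filter (fun p => ¬(∃ c, p = ρ c ∧ T c) ∧ gg p = n) with hSn
    set Sn' : Finset (Pushout ψ.ln φ'.lm) :=
      Finset.univ.filter (fun p => ¬(∃ c', p = ρ' c' ∧ T' c') ∧ gg' p = n) with hSn'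
    have himg : Sn.image χ₀ = Sn' := by
      ext p'
      simp only [hSn, hSn', Finset.mem_image, Finset.mem_filter, Finset.mem_univ, true_and]
      constructor
      · rintro ⟨p, ⟨hp1, hp2⟩, rfl⟩
        refine ⟨?_, by rw [hgen0]; exact hp2⟩
        rintro ⟨c', hpc', hTc'⟩
        obtain ⟨c, hc⟩ := hTc'
        have hpc : p = ρ c := χ₀.injective (hpc'.trans hc.symm)
        exact hp1 ⟨c, hpc, ⟨c', hc⟩⟩
      · rintro ⟨hp1, hp2⟩
        refine ⟨χ₀.symm p', ⟨?_, ?_⟩, χ₀.apply_symm_apply p'⟩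
        · rintro ⟨c, hpc, hTc⟩
          obtain ⟨c', hc'⟩ := hTc
          refine hp1 ⟨c', ?_, ⟨c, hc'⟩⟩
          rw [← hc', ← hpc, Equiv.apply_symm_apply]
        · have h2 := hgen0 (χ₀.symm p')
          rw [Equiv.apply_symm_apply] at h2
          exact h2.symm.trans hp2
    have hcard1 : Sn.card = Sn'.card := by
      rw [← himg, Finset.card_image_of_injective _ χ₀.injective]
    have hdec : Sn = FAn.image (pInl ψ.ln φ.lm) ∪ Un.image ρ := by
      ext p
      simp only [hSn, hFAn, hUn, Finset.mem_filter, Finset.mem_univ, true_and,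
        Finset.mem_union, Finset.mem_image]
      rcases CobEpi.pushout_cases ψ.ln φ.lm p with ⟨c, rfl⟩ | ⟨a, ha, rfl⟩
      · constructor
        · rintro ⟨h1, h2⟩
          have hTc : ¬ T c := fun hT => h1 ⟨c, rfl, hT⟩
          exact Or.inr ⟨c, ⟨hTc, by rw [← hggρ_notT hTc]; exact h2⟩, rfl⟩
        · rintro (⟨a, ⟨ha, hga⟩, hpa⟩ | ⟨c₂, ⟨hT₂, hg₂⟩, hpc₂⟩)
          · obtain ⟨z, hz, -⟩ := (CobEpi.pInl_eq_pInr hinj).1 hpa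
            exact absurd ⟨z, hz⟩ ha
          · have hc : c₂ = c := hρinj hpc₂
            subst hc
            refine ⟨?_, by rw [hggρ_notT hT₂]; exact hg₂⟩
            rintro ⟨c₃, h₃, hT₃⟩
            have : c₂ = c₃ := hρinj h₃
            exact hT₂ (this ▸ hT₃)
      · constructor
        · rintro ⟨h1, h2⟩
          exact Or.inl ⟨a, ⟨ha, by rw [← hggfree ha]; exact h2⟩, rfl⟩
        · rintro (⟨a₂, ⟨ha₂, hg₂⟩, hpa₂⟩ | ⟨c₂, ⟨hT₂, hg₂⟩, hpc₂⟩)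
          · have haa : a₂ = a := (CobEpi.pInl_eq_pInl_free hinj ha).1 hpa₂
            subst haa
            refine ⟨?_, by rw [hggfree ha₂]; exact hg₂⟩
            rintro ⟨c₃, h₃, -⟩
            obtain ⟨z, hz, -⟩ := (CobEpi.pInl_eq_pInr hinj).1 h₃
            exact ha ⟨z, hz⟩
          · obtain ⟨z, hz, -⟩ := (CobEpi.pInl_eq_pInr hinj).1 hpc₂.symm
            exact absurd ⟨z, hz⟩ ha
    have hdec' : Sn' = FAn.image (pInl ψ.ln φ'.lm) ∪ Un'.image ρ' := by
      ext p
      simp only [hSn', hFAn, hUn', Finset.mem_filter, Finset.mem_univ, true_and,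
        Finset.mem_union, Finset.mem_image]
      rcases CobEpi.pushout_cases ψ.ln φ'.lm p with ⟨c, rfl⟩ | ⟨a, ha, rfl⟩
      · constructor
        · rintro ⟨h1, h2⟩
          have hTc : ¬ T' c := fun hT => h1 ⟨c, rfl, hT⟩
          exact Or.inr ⟨c, ⟨hTc, by rw [← hggρ'_notT hTc]; exact h2⟩, rfl⟩
        · rintro (⟨a, ⟨ha, hga⟩, hpa⟩ | ⟨c₂, ⟨hT₂, hg₂⟩, hpc₂⟩)
          · obtain ⟨z, hz, -⟩ := (CobEpi.pInl_eq_pInr hinj).1 hpa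
            exact absurd ⟨z, hz⟩ ha
          · have hc : c₂ = c := hρ'inj hpc₂
            subst hc
            refine ⟨?_, by rw [hggρ'_notT hT₂]; exact hg₂⟩
            rintro ⟨c₃, h₃, hT₃⟩
            have : c₂ = c₃ := hρ'inj h₃
            exact hT₂ (this ▸ hT₃)
      · constructor
        · rintro ⟨h1, h2⟩
          exact Or.inl ⟨a, ⟨ha, by rw [← hggfree' ha]; exact h2⟩, rfl⟩
        · rintro (⟨a₂, ⟨ha₂, hg₂⟩, hpa₂⟩ | ⟨c₂, ⟨hT₂, hg₂⟩, hpc₂⟩)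
          · have haa : a₂ = a := (CobEpi.pInl_eq_pInl_free hinj ha).1 hpa₂
            subst haa
            refine ⟨?_, by rw [hggfree' ha₂]; exact hg₂⟩
            rintro ⟨c₃, h₃, -⟩
            obtain ⟨z, hz, -⟩ := (CobEpi.pInl_eq_pInr hinj).1 h₃
            exact ha ⟨z, hz⟩
          · obtain ⟨z, hz, -⟩ := (CobEpi.pInl_eq_pInr hinj).1 hpc₂.symm
            exact absurd ⟨z, hz⟩ ha
    have hdisj : Disjoint (FAn.image (pInl ψ.ln φ.lm)) (Un.image ρ) := by
      rw [Finset.disjoint_left]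
      rintro p hp1 hp2
      simp only [Finset.mem_image] at hp1 hp2
      obtain ⟨a, haa, rfl⟩ := hp1
      obtain ⟨c, -, hpc⟩ := hp2
      simp only [hFAn, Finset.mem_filter] at haa
      obtain ⟨z, hz, -⟩ := (CobEpi.pInl_eq_pInr hinj).1 hpc.symm
      exact haa.2.1 ⟨z, hz⟩
    have hdisj' : Disjoint (FAn.image (pInl ψ.ln φ'.lm)) (Un'.image ρ') := by
      rw [Finset.disjoint_left]
      rintro p hp1 hp2
      simp only [Finset.mem_image] at hp1 hp2
      obtain ⟨a, haa, rfl⟩ := hp1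
      obtain ⟨c, -, hpc⟩ := hp2
      simp only [hFAn, Finset.mem_filter] at haa
      obtain ⟨z, hz, -⟩ := (CobEpi.pInl_eq_pInr hinj).1 hpc.symm
      exact haa.2.1 ⟨z, hz⟩
    have hinjFA : Set.InjOn (pInl ψ.ln φ.lm) FAn := by
      intro a haa b hbb hab
      simp only [hFAn, Finset.coe_filter, Set.mem_setOf_eq] at hbb
      exact (CobEpi.pInl_eq_pInl_free hinj hbb.2.1).1 hab
    have hinjFA' : Set.InjOn (pInl ψ.ln φ'.lm) FAn := by
      intro a haa b hbb hab
      simp only [hFAn, Finset.coe_filter, Set.mem_setOf_eq] at hbb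
      exact (CobEpi.pInl_eq_pInl_free hinj hbb.2.1).1 hab
    have e1 : Sn.card = FAn.card + Un.card := by
      rw [hdec, Finset.card_union_of_disjoint hdisj, Finset.card_image_of_injOn hinjFA,
        Finset.card_image_of_injective _ hρinj]
    have e2 : Sn'.card = FAn.card + Un'.card := by
      rw [hdec', Finset.card_union_of_disjoint hdisj', Finset.card_image_of_injOn hinjFA',
        Finset.card_image_of_injective _ hρ'inj]
    omega
  -- the unlinked parts are genus-preservingly equivalent
  have hUcard : ∀ n : ℕ,
      Fintype.card {x : {c : φ.C // ¬ T c} // φ.g x.1 = n}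
        = Fintype.card {x : {c' : φ'.C // ¬ T' c'} // φ'.g x.1 = n} := by
    intro n
    have e1 : Fintype.card {x : {c : φ.C // ¬ T c} // φ.g x.1 = n}
        = Fintype.card {c : φ.C // ¬ T c ∧ φ.g c = n} :=
      Fintype.card_congr (Equiv.subtypeSubtypeEquivSubtypeInter (fun c => ¬ T c) (fun c => φ.g c = n))
    have e2 : Fintype.card {x : {c' : φ'.C // ¬ T' c'} // φ'.g x.1 = n}
        = Fintype.card {c' : φ'.C // ¬ T' c' ∧ φ'.g c' = n} :=
      Fintype.card_congr (Equiv.subtypeSubtypeEquivSubtypeInter (fun c' => ¬ T' c') (fun c' => φ'.g c' = n))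
    rw [e1, e2, Fintype.card_subtype, Fintype.card_subtype]
    exact hcount n
  let ξU : {c : φ.C // ¬ T c} ≃ {c' : φ'.C // ¬ T' c'} :=
    Equiv.ofFiberEquiv (f := fun x => φ.g x.1) (g := fun x => φ'.g x.1)
      (fun n => Fintype.equivOfCardEq (hUcard n))
  have hξU : ∀ x : {c : φ.C // ¬ T c}, φ'.g (ξU x).1 = φ.g x.1 := by
    intro x
    exact Equiv.ofFiberEquiv_map (f := fun y : {c : φ.C // ¬ T c} => φ.g y.1)
      (g := fun y : {c' : φ'.C // ¬ T' c'} => φ'.g y.1)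
      (fun n => Fintype.equivOfCardEq (hUcard n)) x
  -- the linked parts match up via χ₀
  let ξT : {c : φ.C // T c} ≃ {c' : φ'.C // T' c'} :=
    { toFun := fun c => ⟨c.2.choose, c.1, c.2.choose_spec⟩
      invFun := fun c' => ⟨c'.2.choose, c'.1, c'.2.choose_spec⟩
      left_inv := by
        intro c
        exact Subtype.ext (hρinj (χ₀.injective
          ((⟨c.1, c.2.choose_spec⟩ : T' c.2.choose).choose_spec.trans c.2.choose_spec.symm)))
      right_inv := by
        intro c'
        exact Subtype.ext (hρ'inj
          ((⟨c'.1, c'.2.choose_spec⟩ : T c'.2.choose).choose_spec.symm.trans c'.2.choose_spec)) }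
  have hξT : ∀ (c : φ.C) (hc : T c), (ξT ⟨c, hc⟩).1 = hc.choose := fun _ _ => rfl
  have hξTspec : ∀ (c : φ.C) (hc : T c), χ₀ (ρ c) = ρ' ((ξT ⟨c, hc⟩).1) :=
    fun c hc => hc.choose_spec
  let ξ : φ.C ≃ φ'.C := (Equiv.sumCompl T).symm.trans ((ξT.sumCongr ξU).trans (Equiv.sumCompl T'))
  have happly_pos : ∀ (c : φ.C) (hc : T c), ξ c = (ξT ⟨c, hc⟩).1 := by
    intro c hc
    simp only [ξ, Equiv.trans_apply, Equiv.sumCompl_symm_apply_of_pos hc,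
      Equiv.sumCongr_apply, Sum.map_inl, Equiv.sumCompl_apply_inl]
  have happly_neg : ∀ (c : φ.C) (hc : ¬ T c), ξ c = (ξU ⟨c, hc⟩).1 := by
    intro c hc
    simp only [ξ, Equiv.trans_apply, Equiv.sumCompl_symm_apply_of_neg hc,
      Equiv.sumCongr_apply, Sum.map_inr, Equiv.sumCompl_apply_inr]
  refine ⟨ξ, ?_, ?_, ?_⟩
  · intro y
    have hc : T (φ.lm y) := ⟨φ'.lm y, hχlm y⟩
    rw [happly_pos (φ.lm y) hc]
    exact hρ'inj ((hξTspec (φ.lm y) hc).symm.trans (hχlm y))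
  · intro z
    have hc : T (φ.ln z) := ⟨φ'.ln z, hln0 z⟩
    rw [happly_pos (φ.ln z) hc]
    exact hρ'inj ((hξTspec (φ.ln z) hc).symm.trans (hln0 z))
  · intro c
    by_cases hc : T c
    · rw [happly_pos c hc]
      exact hglinked (hξTspec c hc)
    · rw [happly_neg c hc]
      exact hξU ⟨c, hc⟩
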